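/- A surjective dynamical system (X, f) (X a nonempty compact metric space, f : X → X a continuous surjection) is zero-dimensional if and only if it is topologically conjugate to the inverse limit system (V_G, E_G) of some inverse sequence of graph covers. -/

import Mathlib

/-- An inverse sequence of graph covers: graphs `G_i = (V i, E i)` with finite vertex
sets, connecting maps `φ i : V (i+1) → V i` which are +directional edge-surjective
graph homomorphisms between edge-surjective graphs. -/
structure GraphCoverSeq : Type 1 where
  V : ℕ → Type
  fintype : ∀ i, Fintype (V i)
  E : ∀ i, V i → V i → Prop
  φ : ∀ i, V (i + 1) → V i
  graph_edge_surj_in : ∀ i, ∀ v : V i, ∃ u, E i u v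
  graph_edge_surj_out : ∀ i, ∀ v : V i, ∃ w, E i v w
  hom : ∀ i, ∀ u v : V (i + 1), E (i + 1) u v → E i (φ i u) (φ i v)
  edge_surj : ∀ i, ∀ u v : V i, E i u v →
    ∃ a b : V (i + 1), E (i + 1) a b ∧ φ i a = u ∧ φ i b = v
  pos_directional : ∀ i, ∀ u v w : V (i + 1), E (i + 1) u v → E (i + 1) u w → φ i v = φ i w

/-- The inverse limit vertex set `V_G`. -/
def GCLimit (S : GraphCoverSeq) : Type :=
  {x : ∀ i, S.V i // ∀ i, x i = S.φ i (x (i + 1))}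

/-- `V_G` as a subspace of the product of the discrete (finite) spaces `V i`. -/
instance (S : GraphCoverSeq) : TopologicalSpace (GCLimit S) :=
  letI : ∀ i, TopologicalSpace (S.V i) := fun _ => ⊥
  inferInstanceAs (TopologicalSpace {x : ∀ i, S.V i // ∀ i, x i = S.φ i (x (i + 1))})

/-- The inverse limit edge relation `E_G`. -/
def GCLimit.EG {S : GraphCoverSeq} (x y : GCLimit S) : Prop :=
  ∀ i, S.E i (x.1 i) (y.1 i)


open Classical in
/-- From a clopen basis, finite clopen "partition functions" of arbitrarily small mesh. -/
lemma fine_partition {X : Type} [MetricSpace X] [CompactSpace X]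
    {B : Set (Set X)} (hB : TopologicalSpace.IsTopologicalBasis B)
    (hBc : ∀ U ∈ B, IsClopen U) (n : ℕ) :
    ∃ (m : ℕ) (Q : X → Fin m), (∀ v, IsClopen (Q ⁻¹' {v})) ∧
      (∀ x y, Q x = Q y → dist x y < 1 / (n + 1)) := by
  set ε : ℝ := 1 / (2 * (n + 1)) with hε
  have hεpos : 0 < ε := by positivity
  have hcov : ∀ x : X, ∃ U ∈ B, x ∈ U ∧ U ⊆ Metric.ball x ε := by
    intro x
    obtain ⟨U, hU, hxU, hUb⟩ := hB.exists_subset_of_mem_open (Metric.mem_ball_self hεpos)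
      Metric.isOpen_ball
    exact ⟨U, hU, hxU, hUb⟩
  choose U hUB hxU hUb using hcov
  obtain ⟨t, ht⟩ := isCompact_univ.elim_finite_subcover U
    (fun x => (hBc _ (hUB x)).2) (fun x _ => Set.mem_iUnion.2 ⟨x, hxU x⟩)
  set W : Fin t.card → Set X := fun k => U (t.equivFin.symm k) with hW
  have hWcov : ∀ x : X, ∃ k, x ∈ W k := by
    intro x
    obtain ⟨c, hc, hxc⟩ := Set.mem_iUnion₂.1 (ht (Set.mem_univ x))
    exact ⟨t.equivFin ⟨c, hc⟩, by simpa [hW] using hxc⟩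
  have hne : ∀ x : X, (Finset.univ.filter (fun k => x ∈ W k)).Nonempty := by
    intro x
    obtain ⟨k, hk⟩ := hWcov x
    exact ⟨k, by simp [hk]⟩
  set Q : X → Fin t.card := fun x => (Finset.univ.filter (fun k => x ∈ W k)).min' (hne x) with hQ
  have hQmem : ∀ x, x ∈ W (Q x) := by
    intro x
    have := Finset.min'_mem _ (hne x)
    simpa [hQ] using this
  have hQle : ∀ x k, x ∈ W k → Q x ≤ k := by
    intro x k hk
    exact Finset.min'_le _ _ (by simp [hk])
  refine ⟨t.card, Q, ?_, ?_⟩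
  · intro v
    have hfib : Q ⁻¹' {v} = W v ∩ ⋂ j ∈ Finset.univ.filter (fun j : Fin t.card => j < v),
        (W j)ᶜ := by
      ext x
      simp only [Set.mem_preimage, Set.mem_singleton_iff, Set.mem_inter_iff, Set.mem_iInter,
        Finset.mem_filter, Finset.mem_univ, true_and, Set.mem_compl_iff]
      constructor
      · rintro rfl
        exact ⟨hQmem x, fun j hj hxj => absurd (hQle x j hxj) (not_le.2 hj)⟩
      · rintro ⟨hxv, hlt⟩
        have h1 : Q x ≤ v := hQle x v hxv
        rcases lt_or_eq_of_le h1 with h | h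
        · exact absurd (hQmem x) (hlt _ h)
        · exact h
    rw [hfib]
    exact (hBc _ (hUB _)).inter (isClopen_biInter_finset fun j _ => (hBc _ (hUB _)).compl)
  · intro x y hxy
    have hx : x ∈ W (Q x) := hQmem x
    have hy : y ∈ W (Q x) := hxy ▸ hQmem y
    set c := (t.equivFin.symm (Q x) : X)
    have hdx : dist x c < ε := Metric.mem_ball.1 (hUb _ hx)
    have hdy : dist y c < ε := Metric.mem_ball.1 (hUb _ hy)
    calc dist x y ≤ dist x c + dist c y := dist_triangle _ _ _
      _ < ε + ε := by rw [dist_comm c y]; exact add_lt_add hdx hdy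
      _ = 1 / (n + 1) := by rw [hε]; rw [← add_div, div_eq_div_iff (by positivity) (by positivity)]; ring


section Aux

variable {X : Type} (f : X → X) (F : ℕ → ℕ) (Q : ∀ n, X → Fin (F n))

/-- The itinerary map at level `i`. -/
def Itin (i : ℕ) (x : X) : ∀ j : Fin (i + 1), Fin (i + 1) → Fin (F j) :=
  fun j k => Q j (f^[k] x)

lemma Itin_compat (i : ℕ) (x : X) :
    Itin f F Q i x = fun (j : Fin (i + 1)) (k : Fin (i + 1)) =>
      Itin f F Q (i + 1) x j.castSucc k.castSucc := rfl

lemma Itin_f (i : ℕ) (x : X) :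
    Itin f F Q i (f x) = fun (j : Fin (i + 1)) (k : Fin (i + 1)) =>
      Itin f F Q (i + 1) x j.castSucc k.succ := by
  funext j k
  show Q j (f^[k] (f x)) = Q j (f^[(k : ℕ) + 1] x)
  rw [Function.iterate_succ_apply]

/-- The graph cover sequence associated to the itinerary maps. -/
noncomputable def coverSeq (hsurj : Function.Surjective f) : GraphCoverSeq where
  V i := ↥(Set.range (Itin f F Q i))
  fintype i := Fintype.ofFinite _
  E i u v := ∃ x, Itin f F Q i x = u.1 ∧ Itin f F Q i (f x) = v.1
  φ i u := ⟨fun j k => u.1 j.castSucc k.castSucc, by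
    obtain ⟨x, hx⟩ := u.2
    exact ⟨x, by rw [← hx]; exact rfl⟩⟩
  graph_edge_surj_in := by
    rintro i ⟨v, x, hx⟩
    obtain ⟨y, hy⟩ := hsurj x
    exact ⟨⟨Itin f F Q i y, ⟨y, rfl⟩⟩, y, rfl, by rw [hy, hx]⟩
  graph_edge_surj_out := by
    rintro i ⟨v, x, hx⟩
    exact ⟨⟨Itin f F Q i (f x), ⟨f x, rfl⟩⟩, x, hx, rfl⟩
  hom := by
    rintro i u v ⟨x, hx1, hx2⟩
    refine ⟨x, ?_, ?_⟩
    · show Itin f F Q i x = fun (j : Fin (i+1)) (k : Fin (i+1)) => u.1 j.castSucc k.castSucc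
      rw [← hx1]; exact rfl
    · show Itin f F Q i (f x) = fun (j : Fin (i+1)) (k : Fin (i+1)) => v.1 j.castSucc k.castSucc
      rw [← hx2]; exact rfl
  edge_surj := by
    rintro i u v ⟨x, hx1, hx2⟩
    refine ⟨⟨Itin f F Q (i + 1) x, ⟨x, rfl⟩⟩, ⟨Itin f F Q (i + 1) (f x), ⟨f x, rfl⟩⟩,
      ⟨x, rfl, rfl⟩, ?_, ?_⟩
    · exact Subtype.ext (by rw [← hx1]; exact (Itin_compat f F Q i x).symm)
    · exact Subtype.ext (by rw [← hx2]; exact (Itin_compat f F Q i (f x)).symm)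
  pos_directional := by
    rintro i u v w ⟨x, hx1, hx2⟩ ⟨y, hy1, hy2⟩
    refine Subtype.ext ?_
    show (fun (j : Fin (i+1)) (k : Fin (i+1)) => v.1 j.castSucc k.castSucc)
      = fun (j : Fin (i+1)) (k : Fin (i+1)) => w.1 j.castSucc k.castSucc
    rw [← hx2, ← hy2]
    show Itin f F Q i (f x) = Itin f F Q i (f y)
    rw [Itin_f f F Q i x, Itin_f f F Q i y, hx1, hy1]

lemma Itin_fiber_clopen [TopologicalSpace X] (hf : Continuous f)
    (hQ : ∀ n v, IsClopen (Q n ⁻¹' {v})) (i : ℕ)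
    (v : ∀ j : Fin (i + 1), Fin (i + 1) → Fin (F j)) :
    IsClopen (Itin f F Q i ⁻¹' {v}) := by
  have : Itin f F Q i ⁻¹' {v}
      = ⋂ (j : Fin (i + 1)) (k : Fin (i + 1)), f^[k] ⁻¹' (Q j ⁻¹' {v j k}) := by
    ext x
    simp [Itin, funext_iff, Set.mem_iInter]
  rw [this]
  exact isClopen_iInter_of_finite fun j =>
    isClopen_iInter_of_finite fun k => (hQ j (v j k)).preimage (hf.iterate k)

end Aux

open TopologicalSpace in
lemma forward_dir {X : Type} [MetricSpace X] [CompactSpace X] [Nonempty X]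
    (f : X → X) (hf : Continuous f) (hsurj : Function.Surjective f)
    {B : Set (Set X)} (hB : TopologicalSpace.IsTopologicalBasis B)
    (hBc : ∀ U ∈ B, IsClopen U) :
    ∃ (S : GraphCoverSeq) (g : GCLimit S → GCLimit S) (h : X → GCLimit S),
      (∀ x : GCLimit S, GCLimit.EG x (g x)) ∧ IsHomeomorph h ∧ h ∘ f = g ∘ h := by
  choose F Q hQclopen hQdist using fun n => fine_partition hB hBc n
  set S := coverSeq f F Q hsurj with hSdef
  have hmapcompat : ∀ (x : X) (i : ℕ),
      (⟨Itin f F Q i x, ⟨x, rfl⟩⟩ : S.V i) = S.φ i ⟨Itin f F Q (i+1) x, ⟨x, rfl⟩⟩ :=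
    fun x i => Subtype.ext rfl
  set hmap : X → GCLimit S :=
    fun x => ⟨fun i => ⟨Itin f F Q i x, ⟨x, rfl⟩⟩, fun i => hmapcompat x i⟩ with hmapdef
  have hinj : Function.Injective hmap := by
    intro x y hxy
    have hP : ∀ i, Itin f F Q i x = Itin f F Q i y := fun i =>
      congrArg Subtype.val (congrFun (congrArg Subtype.val hxy) i)
    have hQxy : ∀ n, Q n x = Q n y := by
      intro n
      exact congrFun (congrFun (hP n) (Fin.last n)) 0
    have hd : ∀ n : ℕ, dist x y < 1 / (n + 1) := fun n => hQdist n x y (hQxy n)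
    by_contra hne
    obtain ⟨n, hn⟩ := exists_nat_one_div_lt (dist_pos.2 hne)
    exact absurd (hd n) (not_lt.2 hn.le)
  have hsurj' : Function.Surjective hmap := by
    intro y
    have hC : ∀ i, IsClopen (Itin f F Q i ⁻¹' {(y.1 i).1}) := fun i =>
      Itin_fiber_clopen f F Q hf hQclopen i _
    have hsub : ∀ i, Itin f F Q (i+1) ⁻¹' {(y.1 (i+1)).1}
        ⊆ Itin f F Q i ⁻¹' {(y.1 i).1} := by
      intro i z hz
      simp only [Set.mem_preimage, Set.mem_singleton_iff] at hz ⊢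
      have h2 : (y.1 i).1
          = fun (j : Fin (i+1)) (k : Fin (i+1)) => (y.1 (i+1)).1 j.castSucc k.castSucc :=
        congrArg Subtype.val (y.2 i)
      rw [h2, ← hz]
      exact rfl
    have hne : ∀ i, (Itin f F Q i ⁻¹' {(y.1 i).1}).Nonempty := fun i => (y.1 i).2
    obtain ⟨x, hx⟩ := IsCompact.nonempty_iInter_of_sequence_nonempty_isCompact_isClosed _
      hsub hne ((hC 0).1.isCompact) (fun i => (hC i).1)
    refine ⟨x, ?_⟩
    exact Subtype.ext (funext fun i => Subtype.ext (Set.mem_iInter.1 hx i))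
  have hcont : Continuous hmap := by
    letI : ∀ i, TopologicalSpace (S.V i) := fun _ => ⊥
    letI : ∀ i, DiscreteTopology (S.V i) := fun _ => ⟨rfl⟩
    have : Continuous (fun x : X =>
        (⟨fun i => ⟨Itin f F Q i x, ⟨x, rfl⟩⟩, fun i => hmapcompat x i⟩ :
          {z : ∀ i, S.V i // ∀ i, z i = S.φ i (z (i+1))})) := by
      refine Continuous.subtype_mk (continuous_pi fun i => ?_) _
      refine continuous_discrete_rng.2 fun b => ?_
      have hpre : (fun x : X => (⟨Itin f F Q i x, ⟨x, rfl⟩⟩ : S.V i)) ⁻¹' {b}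
          = Itin f F Q i ⁻¹' {b.1} := by
        ext z
        exact Subtype.ext_iff
      refine (congrArg IsOpen hpre).mpr ?_
      exact (Itin_fiber_clopen f F Q hf hQclopen i b.1).2
    exact this
  haveI hT2 : T2Space (GCLimit S) := by
    letI : ∀ i, TopologicalSpace (S.V i) := fun _ => ⊥
    letI : ∀ i, DiscreteTopology (S.V i) := fun _ => ⟨rfl⟩
    exact inferInstanceAs (T2Space {z : ∀ i, S.V i // ∀ i, z i = S.φ i (z (i+1))})
  set e : X ≃ GCLimit S := Equiv.ofBijective hmap ⟨hinj, hsurj'⟩ with hedef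
  have hconte : Continuous e := hcont
  refine ⟨S, fun y => hmap (f (e.symm y)), hmap, ?_, ?_, ?_⟩
  · intro x
    obtain ⟨p, rfl⟩ := hsurj' x
    have h2 : e.symm (hmap p) = p := e.symm_apply_apply p
    show GCLimit.EG (hmap p) (hmap (f (e.symm (hmap p))))
    rw [h2]
    intro i
    exact ⟨p, rfl, rfl⟩
  · exact hconte.homeoOfEquivCompactToT2.isHomeomorph
  · funext x
    show hmap (f x) = hmap (f (e.symm (hmap x)))
    have h2 : e.symm (hmap x) = x := e.symm_apply_apply x
    rw [h2]

/-- **Theorem (Shimomura's characterisation).** A surjective dynamical system `(X, f)`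
is zero-dimensional iff it is topologically conjugate to the inverse limit system
`(V_G, E_G)` of some inverse sequence of graph covers. -/
theorem zero_dim_iff_conjugate_to_graph_cover_limit {X : Type} [MetricSpace X]
    [CompactSpace X] [Nonempty X] (f : X → X) (hf : Continuous f)
    (hsurj : Function.Surjective f) :
    (∃ B : Set (Set X), TopologicalSpace.IsTopologicalBasis B ∧ ∀ U ∈ B, IsClopen U) ↔
      ∃ (S : GraphCoverSeq) (g : GCLimit S → GCLimit S) (h : X → GCLimit S),
        (∀ x : GCLimit S, GCLimit.EG x (g x)) ∧ IsHomeomorph h ∧ h ∘ f = g ∘ h := by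
  constructor
  · rintro ⟨B, hB, hBc⟩
    exact forward_dir f hf hsurj hB hBc
  · rintro ⟨S, g, h, hEG, hhomeo, hconj⟩
    letI : ∀ i, TopologicalSpace (S.V i) := fun _ => ⊥
    letI : ∀ i, DiscreteTopology (S.V i) := fun _ => ⟨rfl⟩
    haveI : TotallyDisconnectedSpace (GCLimit S) :=
      inferInstanceAs (TotallyDisconnectedSpace
        {z : ∀ i, S.V i // ∀ i, z i = S.φ i (z (i+1))})
    haveI : TotallyDisconnectedSpace X :=
      hhomeo.isEmbedding.isTotallyDisconnected_range.mp
        (isTotallyDisconnected_of_totallyDisconnectedSpace _)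
    exact ⟨{s | IsClopen s}, isTopologicalBasis_isClopen, fun U hU => hU⟩
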